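/- Let A be an n×n real symmetric positive semidefinite matrix and let X be an n×ℓ real matrix. Then the Nyström approximation A⟨X⟩ = (AX)(XᵀAX)†(AX)ᵀ satisfies A⟨X⟩ = A^{1/2} Π A^{1/2}, where Π is the orthogonal projection matrix onto the column space of A^{1/2}X. -/

import Mathlib

open Matrix MeasureTheory ProbabilityTheory
open scoped Classical

/-- Moore–Penrose pseudoinverse (characterized by the four Penrose conditions). -/
noncomputable def pinv {m n : ℕ} (A : Matrix (Fin m) (Fin n) ℝ) : Matrix (Fin n) (Fin m) ℝ :=
  if h : ∃ B : Matrix (Fin n) (Fin m) ℝ,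
      A * B * A = A ∧ B * A * B = B ∧ (A * B)ᵀ = A * B ∧ (B * A)ᵀ = B * A
  then h.choose else 0

/-- Nyström approximation of `A` with respect to the test matrix `X`. -/
noncomputable def nystrom {n l : ℕ} (A : Matrix (Fin n) (Fin n) ℝ)
    (X : Matrix (Fin n) (Fin l) ℝ) : Matrix (Fin n) (Fin n) ℝ :=
  A * X * pinv (Xᵀ * A * X) * (A * X)ᵀ

/-- Spectral (ℓ² operator) norm of a matrix. -/
noncomputable def specNorm {m n : ℕ} (M : Matrix (Fin m) (Fin n) ℝ) : ℝ :=
  ‖LinearMap.toContinuousLinearMap (Matrix.toEuclideanLin M)‖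

/-- Frobenius norm of a matrix. -/
noncomputable def frobNorm {m n : ℕ} (M : Matrix (Fin m) (Fin n) ℝ) : ℝ :=
  Real.sqrt (∑ i, ∑ j, (M i j) ^ 2)

/-- Euclidean norm of a vector. -/
noncomputable def euclNorm {n : ℕ} (x : Fin n → ℝ) : ℝ :=
  Real.sqrt (∑ i, (x i) ^ 2)

/-- Law of an `n × l` random matrix with independent standard normal entries. -/
noncomputable def gaussianEnsemble (n l : ℕ) : Measure (Fin n → Fin l → ℝ) :=
  Measure.pi fun _ => Measure.pi fun _ => gaussianReal 0 1

/-- `Matrix.PosSemidef.sqrt` as defined in the older Mathlib (removed since). -/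
noncomputable def Matrix.PosSemidef.sqrt {n : Type*} {𝕜 : Type*} [Fintype n] [RCLike 𝕜]
    [PartialOrder 𝕜] [StarOrderedRing 𝕜] [DecidableEq n] {A : Matrix n n 𝕜} (hA : A.PosSemidef) : Matrix n n 𝕜 :=
  hA.1.eigenvectorUnitary.1 * diagonal ((↑) ∘ (√·) ∘ hA.1.eigenvalues) *
  (star hA.1.eigenvectorUnitary : Matrix n n 𝕜)

/-- The psd square root of a psd matrix (junk value `0` otherwise). -/
noncomputable def matSqrt {n : ℕ} (M : Matrix (Fin n) (Fin n) ℝ) : Matrix (Fin n) (Fin n) ℝ :=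
  if hM : M.PosSemidef then hM.sqrt else 0

/-- ℓ² condition number of a symmetric matrix: ratio of the largest to the smallest
eigenvalue (junk value `0` for non-symmetric matrices). -/
noncomputable def kappa {n : ℕ} (M : Matrix (Fin n) (Fin n) ℝ) : ℝ :=
  if hM : M.IsHermitian then (⨆ i, hM.eigenvalues i) / (⨅ i, hM.eigenvalues i) else 0

/- ====================== auxiliary lemmas ====================== -/

lemma psd_sqrt_mul_self_aux {n : ℕ} {A : Matrix (Fin n) (Fin n) ℝ} (hA : A.PosSemidef) :
    hA.sqrt * hA.sqrt = A := by
  have hUU : star (hA.1.eigenvectorUnitary.1) * hA.1.eigenvectorUnitary.1 = 1 :=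
    (Matrix.mem_unitaryGroup_iff').mp hA.1.eigenvectorUnitary.2
  unfold Matrix.PosSemidef.sqrt
  conv_rhs => rw [hA.1.spectral_theorem, Unitary.conjStarAlgAut_apply]
  simp only [Matrix.mul_assoc]
  rw [← Matrix.mul_assoc (star _) (hA.1.eigenvectorUnitary.1), hUU, Matrix.one_mul,
    ← Matrix.mul_assoc (diagonal _) (diagonal _), diagonal_mul_diagonal]
  congr 3
  funext i
  simp [Real.mul_self_sqrt (hA.eigenvalues_nonneg i)]

lemma psd_sqrt_herm_aux {n : ℕ} {A : Matrix (Fin n) (Fin n) ℝ} (hA : A.PosSemidef) :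
    (hA.sqrt)ᴴ = hA.sqrt := by
  unfold Matrix.PosSemidef.sqrt
  simp [conjTranspose_mul, Matrix.mul_assoc, Matrix.star_eq_conjTranspose,
    conjTranspose_eq_transpose_of_trivial]

lemma real_conjT {a b : ℕ} (M : Matrix (Fin a) (Fin b) ℝ) : Mᴴ = Mᵀ := by
  ext i j; simp [Matrix.conjTranspose_apply]

lemma mat_ext_mulVec {a b : ℕ} {M N : Matrix (Fin a) (Fin b) ℝ}
    (h : ∀ x, M *ᵥ x = N *ᵥ x) : M = N := by
  ext i j
  have := congrFun (h (Pi.single j 1)) i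
  simpa [Matrix.mulVec_single] using this

/-- Uniqueness of the Penrose inverse. -/
lemma penrose_unique {m k : ℕ} (A : Matrix (Fin m) (Fin k) ℝ)
    (B C : Matrix (Fin k) (Fin m) ℝ)
    (hB1 : A * B * A = A) (hB2 : B * A * B = B) (hB3 : (A * B)ᵀ = A * B)
    (hB4 : (B * A)ᵀ = B * A)
    (hC1 : A * C * A = A) (hC2 : C * A * C = C) (hC3 : (A * C)ᵀ = A * C)
    (hC4 : (C * A)ᵀ = C * A) : B = C := by
  have hAB : A * B = A * C := by
    calc A * B = (A * B)ᵀ := hB3.symm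
      _ = Bᵀ * Aᵀ := transpose_mul A B
      _ = Bᵀ * (A * C * A)ᵀ := by conv_lhs => rw [← hC1]
      _ = Bᵀ * (Aᵀ * (A * C)ᵀ) := by rw [transpose_mul (A * C) A]
      _ = (Bᵀ * Aᵀ) * (A * C)ᵀ := (Matrix.mul_assoc _ _ _).symm
      _ = (A * B)ᵀ * (A * C)ᵀ := by rw [transpose_mul A B]
      _ = (A * B) * (A * C) := by rw [hB3, hC3]
      _ = ((A * B) * A) * C := (Matrix.mul_assoc _ _ _).symm
      _ = A * C := by rw [hB1]
  have hBA : B * A = C * A := by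
    calc B * A = (B * A)ᵀ := hB4.symm
      _ = Aᵀ * Bᵀ := transpose_mul B A
      _ = (A * C * A)ᵀ * Bᵀ := by conv_lhs => rw [← hC1]
      _ = (Aᵀ * (A * C)ᵀ) * Bᵀ := by rw [transpose_mul (A * C) A]
      _ = (Aᵀ * (Cᵀ * Aᵀ)) * Bᵀ := by rw [transpose_mul A C]
      _ = (Aᵀ * Cᵀ) * (Aᵀ * Bᵀ) := by simp only [Matrix.mul_assoc]
      _ = (C * A)ᵀ * (B * A)ᵀ := by rw [← transpose_mul C A, ← transpose_mul B A]
      _ = (C * A) * (B * A) := by rw [hC4, hB4]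
      _ = C * (A * B * A) := by simp only [Matrix.mul_assoc]
      _ = C * A := by rw [hB1]
  calc B = B * A * B := hB2.symm
    _ = C * A * B := by rw [hBA]
    _ = C * (A * B) := by rw [Matrix.mul_assoc]
    _ = C * (A * C) := by rw [hAB]
    _ = C * A * C := by rw [← Matrix.mul_assoc]
    _ = C := hC2

/-- Existence of a Penrose inverse for real symmetric matrices. -/
lemma exists_penrose_herm {k : ℕ} {G : Matrix (Fin k) (Fin k) ℝ} (hG : G.IsHermitian) :
    ∃ B : Matrix (Fin k) (Fin k) ℝ,
      G * B * G = G ∧ B * G * B = B ∧ (G * B)ᵀ = G * B ∧ (B * G)ᵀ = B * G := by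
  set V : Matrix (Fin k) (Fin k) ℝ := (hG.eigenvectorUnitary : Matrix (Fin k) (Fin k) ℝ)
    with hVdef
  have hVV : V * star V = 1 := (Matrix.mem_unitaryGroup_iff).mp hG.eigenvectorUnitary.2
  have hVV' : star V * V = 1 := mul_eq_one_comm.mp hVV
  set d : Fin k → ℝ := hG.eigenvalues with hd
  have hspec : G = V * diagonal d * star V := by
    have h := hG.spectral_theorem
    have : (RCLike.ofReal ∘ hG.eigenvalues : Fin k → ℝ) = d := by
      funext i; simp [hd]
    rw [this, Unitary.conjStarAlgAut_apply] at h
    exact h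
  set e : Fin k → ℝ := fun i => if d i = 0 then 0 else (d i)⁻¹ with he
  have cancel : ∀ X : Matrix (Fin k) (Fin k) ℝ, star V * (V * X) = X := by
    intro X; rw [← Matrix.mul_assoc, hVV', one_mul]
  have hprod : ∀ a b : Fin k → ℝ,
      (V * diagonal a * star V) * (V * diagonal b * star V)
        = V * diagonal (fun i => a i * b i) * star V := by
    intro a b
    have hd2 : diagonal a * diagonal b = diagonal (fun i => a i * b i) :=
      diagonal_mul_diagonal a b
    simp only [Matrix.mul_assoc, cancel]
    rw [← Matrix.mul_assoc (diagonal a), hd2]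
  have hstar : star V = Vᵀ := by
    ext i j; simp [Matrix.star_apply]
  have hTsym : ∀ a : Fin k → ℝ, (V * diagonal a * star V)ᵀ = V * diagonal a * star V := by
    intro a
    rw [hstar]
    simp [transpose_mul, diagonal_transpose, transpose_transpose, Matrix.mul_assoc]
  have hfun : ∀ f g : Fin k → ℝ, f = g →
      V * diagonal f * star V = V * diagonal g * star V := by
    intro f g hf; rw [hf]
  refine ⟨V * diagonal e * star V, ?_, ?_, ?_, ?_⟩
  · rw [hspec, hprod, hprod]
    apply hfun
    funext i
    simp only [he]
    by_cases h : d i = 0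
    · simp [h]
    · rw [if_neg h, mul_inv_cancel₀ h, one_mul]
  · rw [hspec, hprod, hprod]
    apply hfun
    funext i
    simp only [he]
    by_cases h : d i = 0
    · simp [h]
    · rw [if_neg h, inv_mul_cancel₀ h, one_mul]
  · rw [hspec, hprod, hTsym]
  · rw [hspec, hprod, hTsym]

/-- Two symmetric idempotents with the same range coincide. -/
lemma proj_unique {k : ℕ} {M N : Matrix (Fin k) (Fin k) ℝ}
    (hMs : Mᵀ = M) (hMi : M * M = M) (hNs : Nᵀ = N) (hNi : N * N = N)
    (h : LinearMap.range M.mulVecLin = LinearMap.range N.mulVecLin) : M = N := by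
  have key : ∀ (P Q : Matrix (Fin k) (Fin k) ℝ), P * P = P →
      LinearMap.range P.mulVecLin = LinearMap.range Q.mulVecLin → P * Q = Q := by
    intro P Q hPi hr
    apply mat_ext_mulVec
    intro x
    have hx : Q *ᵥ x ∈ LinearMap.range P.mulVecLin := by
      rw [hr]; exact ⟨x, by simp [Matrix.mulVecLin_apply]⟩
    obtain ⟨y, hy⟩ := hx
    simp only [Matrix.mulVecLin_apply] at hy
    rw [← Matrix.mulVec_mulVec, ← hy, Matrix.mulVec_mulVec, hPi, hy]
  have h1 : M * N = N := key M N hMi h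
  have h2 : N * M = M := key N M hNi h.symm
  calc M = N * M := h2.symm
    _ = (Mᵀ * Nᵀ)ᵀ := by rw [transpose_mul, transpose_transpose, transpose_transpose]
    _ = (M * N)ᵀ := by rw [hMs, hNs]
    _ = Nᵀ := by rw [h1]
    _ = N := hNs

/-- The Nyström approximation satisfies
`A⟨X⟩ = A^{1/2} Π A^{1/2}` where `Π` is the orthogonal projection onto the
column space of `A^{1/2} X`. -/
theorem nystrom_eq_sqrt_proj_sqrt {n l : ℕ}
    (A : Matrix (Fin n) (Fin n) ℝ) (hA : A.PosSemidef)
    (X : Matrix (Fin n) (Fin l) ℝ)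
    (Proj : Matrix (Fin n) (Fin n) ℝ)
    (hsym : Projᵀ = Proj) (hidem : Proj * Proj = Proj)
    (hrange : LinearMap.range Proj.mulVecLin
      = LinearMap.range (hA.sqrt * X).mulVecLin) :
    nystrom A X = hA.sqrt * Proj * hA.sqrt := by
  obtain ⟨S, hSdef⟩ : ∃ S, S = hA.sqrt := ⟨_, rfl⟩
  rw [← hSdef] at hrange ⊢
  have hSS : S * S = A := by rw [hSdef]; exact psd_sqrt_mul_self_aux hA
  have hSt : Sᵀ = S := by
    rw [hSdef, ← real_conjT]; exact psd_sqrt_herm_aux hA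
  obtain ⟨B, hBdef⟩ : ∃ B, B = S * X := ⟨_, rfl⟩
  rw [← hBdef] at hrange
  obtain ⟨G, hGdef⟩ : ∃ G, G = Bᵀ * B := ⟨_, rfl⟩
  have hGt : Gᵀ = G := by rw [hGdef, transpose_mul, transpose_transpose]
  have hGherm : G.IsHermitian := by
    show Gᴴ = G; rw [real_conjT]; exact hGt
  have hex := exists_penrose_herm hGherm
  obtain ⟨P, hPdef⟩ : ∃ P, P = pinv G := ⟨_, rfl⟩
  have hPspec : G * P * G = G ∧ P * G * P = P ∧ (G * P)ᵀ = G * P ∧ (P * G)ᵀ = P * G := by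
    rw [hPdef, pinv, dif_pos hex]
    exact hex.choose_spec
  obtain ⟨h1, h2, h3, h4⟩ := hPspec
  -- transpose of P is also a Penrose inverse, hence P is symmetric
  have c1 : G * Pᵀ * G = G := by
    have h := congrArg Matrix.transpose h1
    rw [transpose_mul, transpose_mul, hGt, ← Matrix.mul_assoc] at h
    exact h
  have c2 : Pᵀ * G * Pᵀ = Pᵀ := by
    have h := congrArg Matrix.transpose h2
    rw [transpose_mul, transpose_mul, hGt, ← Matrix.mul_assoc] at h
    exact h
  have e1 : G * Pᵀ = P * G := by rw [← h4, transpose_mul, hGt]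
  have e2 : Pᵀ * G = G * P := by rw [← h3, transpose_mul, hGt]
  have c3 : (G * Pᵀ)ᵀ = G * Pᵀ := by rw [e1]; exact h4
  have c4 : (Pᵀ * G)ᵀ = Pᵀ * G := by rw [e2]; exact h3
  have hPt : Pᵀ = P := penrose_unique G Pᵀ P c1 c2 c3 c4 h1 h2 h3 h4
  -- key identity : B * P * G = B
  have hBPG : B * P * G = B := by
    have hzero : (B * P * G - B)ᵀ * (B * P * G - B) = 0 := by
      have t1 : (B * P * G)ᵀ * (B * P * G) = G := by
        calc (B * P * G)ᵀ * (B * P * G)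
            = Gᵀ * (Pᵀ * Bᵀ) * (B * P * G) := by rw [transpose_mul, transpose_mul, Matrix.mul_assoc Gᵀ]
          _ = G * (P * Bᵀ) * (B * P * G) := by rw [hGt, hPt]
          _ = G * P * (Bᵀ * B) * (P * G) := by simp only [Matrix.mul_assoc]
          _ = G * P * G * (P * G) := by rw [← hGdef]
          _ = G * (P * G) := by rw [h1]
          _ = G * P * G := by rw [← Matrix.mul_assoc]
          _ = G := h1
      have t2 : (B * P * G)ᵀ * B = G := by
        calc (B * P * G)ᵀ * B
            = Gᵀ * (Pᵀ * Bᵀ) * B := by rw [transpose_mul, transpose_mul, Matrix.mul_assoc Gᵀ]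
          _ = G * (P * Bᵀ) * B := by rw [hGt, hPt]
          _ = G * P * (Bᵀ * B) := by simp only [Matrix.mul_assoc]
          _ = G * P * G := by rw [← hGdef]
          _ = G := h1
      have t3 : Bᵀ * (B * P * G) = G := by
        calc Bᵀ * (B * P * G)
            = (Bᵀ * B) * (P * G) := by simp only [Matrix.mul_assoc]
          _ = G * (P * G) := by rw [← hGdef]
          _ = G * P * G := by rw [← Matrix.mul_assoc]
          _ = G := h1
      rw [transpose_sub, Matrix.sub_mul, Matrix.mul_sub, Matrix.mul_sub, t1, t2, t3, ← hGdef]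
      simp
    have hzero' : (B * P * G - B)ᴴ * (B * P * G - B) = 0 := by
      rw [real_conjT]; exact hzero
    have := Matrix.conjTranspose_mul_self_eq_zero.mp hzero'
    exact sub_eq_zero.mp this
  -- Q := B * P * Bᵀ equals Proj
  have hQB : (B * P * Bᵀ) * B = B := by
    calc (B * P * Bᵀ) * B = B * P * (Bᵀ * B) := by simp only [Matrix.mul_assoc]
      _ = B * P * G := by rw [← hGdef]
      _ = B := hBPG
  have hQt : (B * P * Bᵀ)ᵀ = B * P * Bᵀ := by
    rw [transpose_mul, transpose_mul, transpose_transpose, hPt]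
    simp only [Matrix.mul_assoc]
  have hQi : (B * P * Bᵀ) * (B * P * Bᵀ) = B * P * Bᵀ := by
    calc (B * P * Bᵀ) * (B * P * Bᵀ)
        = B * (P * (Bᵀ * B) * P) * Bᵀ := by simp only [Matrix.mul_assoc]
      _ = B * (P * G * P) * Bᵀ := by rw [← hGdef]
      _ = B * P * Bᵀ := by rw [h2]
  have hrQ : LinearMap.range (B * P * Bᵀ).mulVecLin = LinearMap.range B.mulVecLin := by
    apply le_antisymm
    · rw [Matrix.mul_assoc, Matrix.mulVecLin_mul]
      exact LinearMap.range_comp_le_range _ _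
    · conv_lhs => rw [← hQB]
      rw [Matrix.mulVecLin_mul]
      exact LinearMap.range_comp_le_range _ _
  have hQProj : B * P * Bᵀ = Proj :=
    proj_unique hQt hQi hsym hidem (by rw [hrQ, hrange])
  -- assemble
  have hAX : A * X = S * B := by rw [← hSS, Matrix.mul_assoc, hBdef]
  have hBt : Bᵀ = Xᵀ * S := by rw [hBdef, transpose_mul, hSt]
  have hXAX : Xᵀ * A * X = G := by
    calc Xᵀ * A * X = Xᵀ * (S * S) * X := by rw [hSS]
      _ = (Xᵀ * S) * (S * X) := by simp only [Matrix.mul_assoc]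
      _ = Bᵀ * B := by rw [hBt, hBdef]
      _ = G := by rw [← hGdef]
  calc nystrom A X = S * B * pinv G * (S * B)ᵀ := by rw [nystrom, hAX, hXAX]
    _ = S * B * P * (Bᵀ * Sᵀ) := by rw [← hPdef, transpose_mul S B]
    _ = S * (B * (P * (Bᵀ * S))) := by rw [hSt]; simp only [Matrix.mul_assoc]
    _ = S * ((B * P * Bᵀ) * S) := by simp only [Matrix.mul_assoc]
    _ = S * (Proj * S) := by rw [hQProj]
    _ = S * Proj * S := by rw [Matrix.mul_assoc]
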